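/- The Finite Unions Theorem implies Hindman's Theorem: assuming that every finite coloring of the nonempty finite subsets of ℕ admits an infinite pairwise-disjoint family all of whose nonempty finite unions are monochromatic, it follows that every finite coloring of the positive integers admits an infinite set all of whose nonempty finite sums of distinct elements are monochromatic. -/

import Mathlib

private def twoPow (T : Finset ℕ) : ℕ := ∑ k ∈ T, 2 ^ k

private theorem twoPow_injective : Function.Injective twoPow := by
  intro S T h
  have := congrArg (fun n => n.bitIndices.toFinset) h
  simpa [twoPow] using this

/-- The Finite Unions Theorem implies Hindman's Theorem. -/
theorem finite_unions_implies_hindman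
    (hFU : ∀ (r : ℕ) (c : Finset ℕ → Fin r),
      ∃ (i : Fin r) (𝒮 : Set (Finset ℕ)), 𝒮.Infinite ∧ (∀ S ∈ 𝒮, S.Nonempty) ∧
        𝒮.Pairwise Disjoint ∧
        ∀ F : Finset (Finset ℕ), ↑F ⊆ 𝒮 → F.Nonempty → c (F.sup id) = i) :
    ∀ (r : ℕ) (c : ℕ → Fin r),
      ∃ (i : Fin r) (S : Set ℕ), S.Infinite ∧ (∀ n ∈ S, 0 < n) ∧
        ∀ F : Finset ℕ, ↑F ⊆ S → F.Nonempty → c (∑ n ∈ F, n) = i := by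
  intro r c
  obtain ⟨i, 𝒮, hinf, hne, hdisj, hmono⟩ := hFU r (fun T => c (twoPow T))
  refine ⟨i, twoPow '' 𝒮, hinf.image (twoPow_injective.injOn), ?_, ?_⟩
  · rintro n ⟨T, hT, rfl⟩
    obtain ⟨k, hk⟩ := hne T hT
    exact lt_of_lt_of_le (Nat.pow_pos (by norm_num) : 0 < 2 ^ k)
      (Finset.single_le_sum (fun _ _ => Nat.zero_le _) hk)
  · intro F hF hFne
    set g := Function.invFun twoPow with hg
    have hgf : ∀ n ∈ F, twoPow (g n) = n := by
      intro n hn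
      obtain ⟨T, hT, rfl⟩ := hF hn
      rw [hg, Function.leftInverse_invFun twoPow_injective T]
    have hmem : ∀ n ∈ F, g n ∈ 𝒮 := by
      intro n hn
      obtain ⟨T, hT, rfl⟩ := hF hn
      rwa [hg, Function.leftInverse_invFun twoPow_injective T]
    set G := F.image g with hG
    have hGsub : ↑G ⊆ 𝒮 := by
      intro T hT
      simp only [hG, Finset.coe_image, Set.mem_image, Finset.mem_coe] at hT
      obtain ⟨n, hn, rfl⟩ := hT
      exact hmem n hn
    have hGne : G.Nonempty := hFne.image g
    have hinjG : Set.InjOn g F := by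
      intro a ha b hb hab
      rw [← hgf a ha, ← hgf b hb, hab]
    have hsum : ∑ n ∈ F, n = twoPow (G.sup id) := by
      have hdisjG : ∀ T ∈ G, ∀ T' ∈ G, T ≠ T' → Disjoint (id T) (id T') := by
        intro T hT T' hT' hne'
        exact hdisj (hGsub hT) (hGsub hT') hne'
      calc ∑ n ∈ F, n = ∑ n ∈ F, twoPow (g n) := by
              exact Finset.sum_congr rfl fun n hn => (hgf n hn).symm
        _ = ∑ T ∈ G, twoPow T := (Finset.sum_image (fun a ha b hb => hinjG ha hb)).symm
        _ = ∑ T ∈ G, ∑ k ∈ (id T), 2 ^ k := rfl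
        _ = ∑ k ∈ G.biUnion id, 2 ^ k := (Finset.sum_biUnion hdisjG).symm
        _ = twoPow (G.sup id) := by rw [twoPow, Finset.sup_eq_biUnion]
    rw [hsum]
    exact hmono G hGsub hGne
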